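/- Let an N-player potential game with N = 2k even (k ≥ 1) have strategy sets K_i ⊆ ℝ^{n_i} with 0 ∈ K and each K_i symmetric, and let φ be a potential function. Then for every z ∈ K, φ(z) = φ(0) + h_{P₂}(0, (z_1, z_2)) + Σ_{i=2}^{k} h_{2i−1,2i}(0, 0, z_{2i−1}, z_{2i}; ẑ_{2i−2}), where ẑ_m = (z_1, …, z_m, 0, …, 0), h_{P₂}(0, (z_1,z_2)) = [f_1(z_1, 0, …, 0) − f_1(0)] + [f_2(z_1, z_2, 0, …, 0) − f_2(z_1, 0, …, 0)], and h_{ij} is the pairwise incremental cost difference function. -/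

import Mathlib

noncomputable section

/-- The set of joint strategy profiles of a game with strategy sets `K i ⊆ ℝ^{n i}`. -/
def jointK {N : ℕ} {n : Fin N → ℕ}
    (K : ∀ i, Set (EuclideanSpace ℝ (Fin (n i)))) :
    Set (∀ i, EuclideanSpace ℝ (Fin (n i))) :=
  {x | ∀ i, x i ∈ K i}

/-- `φ` is an exact potential function for the game with strategy sets `K` and costs `f`. -/
def IsPotential {N : ℕ} {n : Fin N → ℕ}
    (K : ∀ i, Set (EuclideanSpace ℝ (Fin (n i))))
    (f : Fin N → (∀ i, EuclideanSpace ℝ (Fin (n i))) → ℝ)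
    (φ : (∀ i, EuclideanSpace ℝ (Fin (n i))) → ℝ) : Prop :=
  ∀ i : Fin N, ∀ x ∈ jointK K, ∀ xi' ∈ K i,
    f i (Function.update x i xi') - f i x = φ (Function.update x i xi') - φ x

/-- The game is a potential game. -/
def IsPotentialGame {N : ℕ} {n : Fin N → ℕ}
    (K : ∀ i, Set (EuclideanSpace ℝ (Fin (n i))))
    (f : Fin N → (∀ i, EuclideanSpace ℝ (Fin (n i))) → ℝ) : Prop :=
  ∃ φ, IsPotential K f φ

/-- `hij f i j z yi yj` : the pairwise incremental cost difference
`f_i(z_i+y_i, z_j; z₋) − f_i(z_i, z_j; z₋) + f_j(z_j+y_j, z_i+y_i; z₋) − f_j(z_j, z_i+y_i; z₋)`. -/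
def hij {N : ℕ} {n : Fin N → ℕ}
    (f : Fin N → (∀ k, EuclideanSpace ℝ (Fin (n k))) → ℝ)
    (i j : Fin N) (z : ∀ k, EuclideanSpace ℝ (Fin (n k)))
    (yi : EuclideanSpace ℝ (Fin (n i))) (yj : EuclideanSpace ℝ (Fin (n j))) : ℝ :=
  f i (Function.update z i (z i + yi)) - f i z
    + f j (Function.update (Function.update z i (z i + yi)) j (z j + yj))
    - f j (Function.update z i (z i + yi))

/-- `trunc z m` : the profile `ẑ_m = (z_1, …, z_m, 0, …, 0)`. -/
def trunc {N : ℕ} {n : Fin N → ℕ}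
    (z : ∀ k, EuclideanSpace ℝ (Fin (n k))) (m : ℕ) :
    ∀ k, EuclideanSpace ℝ (Fin (n k)) :=
  fun j => if (j : ℕ) < m then z j else 0

-- aux
lemma trunc_apply_of_le {N : ℕ} {n : Fin N → ℕ}
    (z : ∀ k, EuclideanSpace ℝ (Fin (n k))) {m : ℕ} {j : Fin N} (h : m ≤ (j : ℕ)) :
    trunc z m j = 0 := by
  simp [trunc, Nat.not_lt.mpr h]

lemma update_trunc {N : ℕ} {n : Fin N → ℕ}
    (z : ∀ k, EuclideanSpace ℝ (Fin (n k))) (m : ℕ) (hm : m < N) :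
    Function.update (trunc z m) ⟨m, hm⟩ (z ⟨m, hm⟩) = trunc z (m + 1) := by
  funext j
  rcases eq_or_ne j ⟨m, hm⟩ with h | h
  · subst h
    simp [Function.update_self, trunc]
  · rw [Function.update_of_ne h]
    have hne : (j : ℕ) ≠ m := fun hh => h (Fin.ext hh)
    unfold trunc
    split_ifs with h1 h2 <;> first | rfl | omega

lemma trunc_mem {N : ℕ} {n : Fin N → ℕ}
    {K : ∀ i, Set (EuclideanSpace ℝ (Fin (n i)))}
    {z : ∀ k, EuclideanSpace ℝ (Fin (n k))}
    (h0 : (0 : ∀ i, EuclideanSpace ℝ (Fin (n i))) ∈ jointK K)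
    (hz : z ∈ jointK K) (m : ℕ) : trunc z m ∈ jointK K := by
  intro j
  unfold trunc
  split_ifs
  · exact hz j
  · exact h0 j

lemma key_step {N : ℕ} {n : Fin N → ℕ}
    {K : ∀ i, Set (EuclideanSpace ℝ (Fin (n i)))}
    {f : Fin N → (∀ i, EuclideanSpace ℝ (Fin (n i))) → ℝ}
    {φ : (∀ i, EuclideanSpace ℝ (Fin (n i))) → ℝ}
    (hφ : IsPotential K f φ)
    (h0 : (0 : ∀ i, EuclideanSpace ℝ (Fin (n i))) ∈ jointK K)
    {z : ∀ k, EuclideanSpace ℝ (Fin (n k))} (hz : z ∈ jointK K)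
    (m : ℕ) (hm : m < N) :
    f ⟨m, hm⟩ (trunc z (m + 1)) - f ⟨m, hm⟩ (trunc z m)
      = φ (trunc z (m + 1)) - φ (trunc z m) := by
  have := hφ ⟨m, hm⟩ (trunc z m) (trunc_mem h0 hz m) (z ⟨m, hm⟩) (hz _)
  rwa [update_trunc z m hm] at this

lemma hij_eq {N : ℕ} {n : Fin N → ℕ}
    {K : ∀ i, Set (EuclideanSpace ℝ (Fin (n i)))}
    {f : Fin N → (∀ i, EuclideanSpace ℝ (Fin (n i))) → ℝ}
    {φ : (∀ i, EuclideanSpace ℝ (Fin (n i))) → ℝ}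
    (hφ : IsPotential K f φ)
    (h0 : (0 : ∀ i, EuclideanSpace ℝ (Fin (n i))) ∈ jointK K)
    {z : ∀ k, EuclideanSpace ℝ (Fin (n k))} (hz : z ∈ jointK K)
    (m : ℕ) (hm : m + 1 < N) :
    hij f ⟨m, by omega⟩ ⟨m + 1, hm⟩ (trunc z m) (z ⟨m, by omega⟩) (z ⟨m + 1, hm⟩)
      = φ (trunc z (m + 2)) - φ (trunc z m) := by
  have hm0 : m < N := by omega
  have e1 : trunc z m ⟨m, hm0⟩ = 0 := trunc_apply_of_le z (le_refl m)
  have e2 : trunc z m ⟨m + 1, hm⟩ = 0 := trunc_apply_of_le z (Nat.le_succ m)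
  unfold hij
  rw [e1, e2, zero_add, zero_add, update_trunc z m hm0, update_trunc z (m + 1) hm]
  have k1 := key_step hφ h0 hz m hm0
  have k2 := key_step hφ h0 hz (m + 1) hm
  linarith [k1, k2]

lemma tele (G : ℕ → ℝ) : ∀ k : ℕ, 1 ≤ k →
    ∑ i ∈ Finset.Icc 2 k, (G (2 * i) - G (2 * i - 2)) = G (2 * k) - G 2 := by
  intro k
  induction k with
  | zero => omega
  | succ k ih =>
    intro _
    rcases Nat.eq_or_lt_of_le (Nat.one_le_iff_ne_zero.mpr (Nat.succ_ne_zero k)) with h | h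
    · have : k = 0 := by omega
      subst this
      simp
    · have hk1 : 1 ≤ k := by omega
      rw [Finset.sum_Icc_succ_top (by omega : 2 ≤ k + 1), ih hk1]
      have : 2 * (k + 1) - 2 = 2 * k := by omega
      rw [this]
      ring

/-- In a potential game with an even number `N = 2k` of players
(`k ≥ 1`), with `0 ∈ K` and symmetric strategy sets, every potential function `φ`
satisfies
`φ(z) = φ(0) + h_{P₂}(0,(z₁,z₂)) + ∑_{i=2}^{k} h_{2i−1,2i}(0,0,z_{2i−1},z_{2i};ẑ_{2i−2})`.
(Players are `1`-indexed in the informal statement; here player `m` is index `m−1`.) -/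
theorem stmt11 {N k : ℕ} {n : Fin N → ℕ} (hN : N = 2 * k) (hk : 1 ≤ k)
    (K : ∀ i, Set (EuclideanSpace ℝ (Fin (n i))))
    (f : Fin N → (∀ i, EuclideanSpace ℝ (Fin (n i))) → ℝ)
    (h0 : (0 : ∀ i, EuclideanSpace ℝ (Fin (n i))) ∈ jointK K)
    (hsym : ∀ i, ∀ v ∈ K i, -v ∈ K i)
    (φ : (∀ i, EuclideanSpace ℝ (Fin (n i))) → ℝ)
    (hφ : IsPotential K f φ) :
    ∀ z ∈ jointK K,
      φ z = φ 0
        + ((f ⟨0, by omega⟩ (trunc z 1) - f ⟨0, by omega⟩ (trunc z 0))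
            + (f ⟨1, by omega⟩ (trunc z 2) - f ⟨1, by omega⟩ (trunc z 1)))
        + ∑ i ∈ (Finset.Icc 2 k).attach,
            hij f ⟨2 * i.1 - 2, by have := Finset.mem_Icc.mp i.2; omega⟩
                  ⟨2 * i.1 - 1, by have := Finset.mem_Icc.mp i.2; omega⟩
                  (trunc z (2 * i.1 - 2))
                  (z ⟨2 * i.1 - 2, by have := Finset.mem_Icc.mp i.2; omega⟩)
                  (z ⟨2 * i.1 - 1, by have := Finset.mem_Icc.mp i.2; omega⟩) := by
  intro z hz
  have h0N : 0 < N := by omega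
  have h1N : 1 < N := by omega
  have htz0 : trunc z 0 = 0 := by
    funext j; simp [trunc]
  have htzN : trunc z N = z := by
    funext j; simp [trunc, j.isLt]
  -- first pair
  have first : (f ⟨0, h0N⟩ (trunc z 1) - f ⟨0, h0N⟩ (trunc z 0))
      + (f ⟨1, h1N⟩ (trunc z 2) - f ⟨1, h1N⟩ (trunc z 1))
      = φ (trunc z 2) - φ (trunc z 0) := by
    have k1 := key_step hφ h0 hz 0 h0N
    have k2 := key_step hφ h0 hz 1 h1N
    linarith [k1, k2]
  -- rewrite the sum
  have hsum : ∑ i ∈ (Finset.Icc 2 k).attach,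
      hij f ⟨2 * i.1 - 2, by have := Finset.mem_Icc.mp i.2; omega⟩
            ⟨2 * i.1 - 1, by have := Finset.mem_Icc.mp i.2; omega⟩
            (trunc z (2 * i.1 - 2))
            (z ⟨2 * i.1 - 2, by have := Finset.mem_Icc.mp i.2; omega⟩)
            (z ⟨2 * i.1 - 1, by have := Finset.mem_Icc.mp i.2; omega⟩)
      = ∑ i ∈ Finset.Icc 2 k, (φ (trunc z (2 * i)) - φ (trunc z (2 * i - 2))) := by
    rw [← Finset.sum_attach (Finset.Icc 2 k)
      (fun i => φ (trunc z (2 * i)) - φ (trunc z (2 * i - 2)))]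
    apply Finset.sum_congr rfl
    intro i _
    have hi := Finset.mem_Icc.mp i.2
    have hm : (2 * i.1 - 2) + 1 < N := by omega
    have he := hij_eq hφ h0 hz (2 * i.1 - 2) hm
    have hfin : (⟨2 * i.1 - 2 + 1, hm⟩ : Fin N) = ⟨2 * i.1 - 1, by omega⟩ :=
      Fin.ext (show 2 * i.1 - 2 + 1 = 2 * i.1 - 1 by omega)
    rw [hfin] at he
    rw [show 2 * i.1 - 2 + 2 = 2 * i.1 from by omega] at he
    exact he
  rw [hsum, tele (fun m => φ (trunc z m)) k hk, first]
  rw [htz0]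
  have : 2 * k = N := hN.symm
  rw [this, htzN]
  ring
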